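/- Let M be a minterm containing a literal alloc(x) (so x must be allocated) and suppose there are pairwise M-distinct tuples ȳ₁,…,ȳ_d such that M contains ¬(x ↪ ȳᵢ) for every i ∈ [1,d] (where distinctness means M entails yᵢⱼ ≉ yᵢ'ⱼ for some coordinate j, for each pair i ≠ i'). Then every model (U,s,h) of M satisfies |U|^k ≥ d + 1, i.e., |U| ≥ ⌈(d+1)^(1/k)⌉. -/

import Mathlib

/-- Domain of a heap: locations where the heap is defined. -/
def hdom {U : Type*} {k : ℕ} (h : U → Option (Fin k → U)) : Set U := {u | (h u).isSome}

/-- if `x` is allocated and there are `d` pairwise distinct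
forbidden tuples that `h(s(x))` avoids, then `|U|^k ≥ d + 1`, i.e.
`|U^k| ≥ d + 1`. -/
theorem stmt12 {U Var : Type*} [Nonempty U] {k : ℕ} (hk : 1 ≤ k)
    (s : Var → U) (h : U → Option (Fin k → U)) (hfin : (hdom h).Finite)
    (x : Var) (d : ℕ) (t : Fin d → (Fin k → U)) (ht : Function.Injective t)
    (halloc : s x ∈ hdom h)
    (hne : ∀ i : Fin d, h (s x) ≠ some (t i)) :
    ((d + 1 : ℕ) : Cardinal) ≤ Cardinal.mk (Fin k → U) := by
  set v : Fin k → U := (h (s x)).get halloc with hv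
  have hvne : ∀ i : Fin d, v ≠ t i := by
    intro i hvi
    apply hne i
    rw [← hvi, hv]
    exact (Option.some_get _).symm
  let f : Fin (d + 1) → (Fin k → U) := fun i =>
    if hi : (i : ℕ) < d then t ⟨i, hi⟩ else v
  have hf : Function.Injective f := by
    intro a b hab
    simp only [f] at hab
    split_ifs at hab with h1 h2 h2
    · exact Fin.ext (congrArg Fin.val (ht hab) : _)
    · exact absurd hab.symm (hvne _)
    · exact absurd hab (hvne _)
    · omega
  have hf' : Function.Injective (f ∘ (ULift.down : ULift (Fin (d + 1)) → Fin (d + 1))) :=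
    hf.comp (fun a b hab => ULift.ext _ _ hab)
  calc ((d + 1 : ℕ) : Cardinal) = Cardinal.mk (ULift (Fin (d + 1))) := by
        simp [Cardinal.mk_fintype]
    _ ≤ Cardinal.mk (Fin k → U) := Cardinal.mk_le_of_injective hf'
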